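/- Let Ω, Ω₁, …, Ωₙ be nonempty closed convex subsets of ℝˢ with Ωᵢ ∩ Ω = ∅ for all i = 1, …, n, let x̄ ∈ Ω, and set aᵢ(x̄) = (x̄ − Π(x̄;Ωᵢ))/d(x̄;Ωᵢ). Suppose Ω has a tangent space at x̄, i.e., there is a linear subspace L ≠ {0} of ℝˢ with N(x̄;Ω) = L^⊥. Then x̄ is an optimal solution of the generalized Heron problem (D(x̄) ≤ D(x) for all x ∈ Ω, D(x) = ∑_{i=1}^n d(x;Ωᵢ)) if and only if ∑_{i=1}^n cos(aᵢ(x̄), u) = 0 for every u ∈ L \ {0}. -/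

import Mathlib

open Metric

lemma norm_add_smul_le_aux {s : ℕ} (v w : EuclideanSpace ℝ (Fin s)) (hv : 0 < ‖v‖) (t : ℝ) :
    ‖v + t • w‖ ≤ ‖v‖ + (2 * t * (inner ℝ v w : ℝ) + t ^ 2 * ‖w‖ ^ 2) / (2 * ‖v‖) := by
  have h2 : ‖v + t • w‖ ^ 2 = ‖v‖ ^ 2 + (2 * t * (inner ℝ v w : ℝ) + t ^ 2 * ‖w‖ ^ 2) := by
    rw [norm_add_sq_real, real_inner_smul_right, norm_smul]
    simp [mul_pow]
    ring
  have key : (‖v + t • w‖ - ‖v‖) * (2 * ‖v‖) ≤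
      2 * t * (inner ℝ v w : ℝ) + t ^ 2 * ‖w‖ ^ 2 := by
    nlinarith [sq_nonneg (‖v + t • w‖ - ‖v‖)]
  have := (le_div_iff₀ (by positivity : (0:ℝ) < 2 * ‖v‖)).mpr key
  linarith

theorem heron_optimal_iff_cos {s n : ℕ}
    (Ω : Set (EuclideanSpace ℝ (Fin s))) (Ωs : Fin n → Set (EuclideanSpace ℝ (Fin s)))
    (hΩne : Ω.Nonempty) (hΩcl : IsClosed Ω) (hΩcv : Convex ℝ Ω)
    (hne : ∀ i, (Ωs i).Nonempty) (hcl : ∀ i, IsClosed (Ωs i)) (hcv : ∀ i, Convex ℝ (Ωs i))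
    (hdisj : ∀ i, Ωs i ∩ Ω = ∅)
    (xbar : EuclideanSpace ℝ (Fin s)) (hxbar : xbar ∈ Ω)
    (p : Fin n → EuclideanSpace ℝ (Fin s))
    (hp : ∀ i, p i ∈ Ωs i ∧ dist xbar (p i) = Metric.infDist xbar (Ωs i))
    (a : Fin n → EuclideanSpace ℝ (Fin s))
    (ha : ∀ i, a i = (Metric.infDist xbar (Ωs i))⁻¹ • (xbar - p i))
    (L : Submodule ℝ (EuclideanSpace ℝ (Fin s))) (hL : L ≠ ⊥)
    (hN : {v : EuclideanSpace ℝ (Fin s) | ∀ x ∈ Ω, (inner ℝ v (x - xbar) : ℝ) ≤ 0}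
        = {v : EuclideanSpace ℝ (Fin s) | ∀ u ∈ L, (inner ℝ v u : ℝ) = 0}) :
    (∀ x ∈ Ω, ∑ i, Metric.infDist xbar (Ωs i) ≤ ∑ i, Metric.infDist x (Ωs i)) ↔
      (∀ u ∈ L, u ≠ 0 → ∑ i, (inner ℝ (a i) u : ℝ) / (‖a i‖ * ‖u‖) = 0) := by
  -- basic facts
  have hd : ∀ i, 0 < Metric.infDist xbar (Ωs i) := by
    intro i
    have hx : xbar ∉ Ωs i := by
      intro h
      have : xbar ∈ Ωs i ∩ Ω := ⟨h, hxbar⟩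
      rw [hdisj i] at this
      exact this
    exact ((hcl i).notMem_iff_infDist_pos (hne i)).mp hx
  have hnorm : ∀ i, ‖xbar - p i‖ = Metric.infDist xbar (Ωs i) := by
    intro i; rw [← dist_eq_norm]; exact (hp i).2
  have hna : ∀ i, ‖a i‖ = 1 := by
    intro i
    rw [ha i, norm_smul, hnorm i, Real.norm_eq_abs, abs_of_pos (inv_pos.mpr (hd i)),
      inv_mul_cancel₀ (hd i).ne']
  -- projection property
  have hproj : ∀ i, ∀ y ∈ Ωs i, (inner ℝ (xbar - p i) (y - p i) : ℝ) ≤ 0 := by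
    intro i
    have heq : ‖xbar - p i‖ = ⨅ w : Ωs i, ‖xbar - (w : EuclideanSpace ℝ (Fin s))‖ := by
      rw [hnorm i, Metric.infDist_eq_iInf]
      simp_rw [dist_eq_norm]
    exact (norm_eq_iInf_iff_real_inner_le_zero (hcv i) (hp i).1).mp heq
  -- inner products with a i
  have hinner_a : ∀ i (z : EuclideanSpace ℝ (Fin s)),
      (inner ℝ (a i) z : ℝ) = (Metric.infDist xbar (Ωs i))⁻¹ * (inner ℝ (xbar - p i) z : ℝ) := by
    intro i z; rw [ha i, real_inner_smul_left]
  -- subgradient inequality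
  have hsub : ∀ i, ∀ x : EuclideanSpace ℝ (Fin s),
      Metric.infDist xbar (Ωs i) + (inner ℝ (a i) (x - xbar) : ℝ) ≤ Metric.infDist x (Ωs i) := by
    intro i x
    conv_rhs => rw [Metric.infDist_eq_iInf]
    haveI : Nonempty (Ωs i) := (hne i).to_subtype
    apply le_ciInf
    intro ⟨y, hy⟩
    have h1 : (inner ℝ (a i) (x - y) : ℝ) ≤ dist x y := by
      calc (inner ℝ (a i) (x - y) : ℝ) ≤ ‖a i‖ * ‖x - y‖ := real_inner_le_norm _ _
        _ = dist x y := by rw [hna i, one_mul, dist_eq_norm]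
    have h2 : Metric.infDist xbar (Ωs i) ≤ (inner ℝ (a i) (xbar - y) : ℝ) := by
      have e1 : (inner ℝ (xbar - p i) (xbar - y) : ℝ)
          = ‖xbar - p i‖ ^ 2 - (inner ℝ (xbar - p i) (y - p i) : ℝ) := by
        rw [← real_inner_self_eq_norm_sq, ← inner_sub_right]
        congr 1
        abel
      have e2 := hproj i y hy
      have e3 : Metric.infDist xbar (Ωs i) ^ 2 ≤ (inner ℝ (xbar - p i) (xbar - y) : ℝ) := by
        rw [e1, hnorm i]; linarith
      rw [hinner_a, le_inv_mul_iff₀ (hd i)]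
      nlinarith [e3]
    have h3 : (inner ℝ (a i) (x - y) : ℝ)
        = (inner ℝ (a i) (x - xbar) : ℝ) + (inner ℝ (a i) (xbar - y) : ℝ) := by
      rw [← inner_add_right]
      congr 1
      abel
    linarith
  set T : EuclideanSpace ℝ (Fin s) := ∑ i, a i with hT
  have hTin : ∀ z : EuclideanSpace ℝ (Fin s),
      (inner ℝ T z : ℝ) = ∑ i, (inner ℝ (a i) z : ℝ) := by
    intro z; rw [hT, sum_inner]
  constructor
  · -- optimality → cosine condition
    intro hopt u hu hu0
    -- first show inner T (x - xbar) ≥ 0 for all x ∈ Ω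
    have hTpos : ∀ x ∈ Ω, 0 ≤ (inner ℝ T (x - xbar) : ℝ) := by
      intro x hx
      set w : EuclideanSpace ℝ (Fin s) := x - xbar with hw
      set C : ℝ := ∑ i, ‖w‖ ^ 2 / (2 * Metric.infDist xbar (Ωs i)) with hC
      have hC0 : 0 ≤ C := Finset.sum_nonneg fun i _ =>
        div_nonneg (sq_nonneg _) (by linarith [hd i])
      have hstep : ∀ t : ℝ, 0 < t → t ≤ 1 → 0 ≤ (inner ℝ T w : ℝ) + t * C := by
        intro t ht ht1
        have hmem : xbar + t • w ∈ Ω := by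
          have := hΩcv hxbar hx (by linarith : (0:ℝ) ≤ 1 - t) ht.le (by ring)
          convert this using 1
          rw [hw]
          module
        have hle := hopt _ hmem
        have hbound : ∀ i, Metric.infDist (xbar + t • w) (Ωs i) ≤
            Metric.infDist xbar (Ωs i) + t * (inner ℝ (a i) w : ℝ)
              + t ^ 2 * (‖w‖ ^ 2 / (2 * Metric.infDist xbar (Ωs i))) := by
          intro i
          have h1 : Metric.infDist (xbar + t • w) (Ωs i) ≤ dist (xbar + t • w) (p i) :=
            Metric.infDist_le_dist_of_mem (hp i).1
          have h2 : dist (xbar + t • w) (p i) = ‖(xbar - p i) + t • w‖ := by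
            rw [dist_eq_norm]
            congr 1
            abel
          have h3 := norm_add_smul_le_aux (xbar - p i) w (by rw [hnorm i]; exact hd i) t
          rw [hnorm i] at h3
          have h4 : (2 * t * (inner ℝ (xbar - p i) w : ℝ) + t ^ 2 * ‖w‖ ^ 2)
              / (2 * Metric.infDist xbar (Ωs i))
              = t * (inner ℝ (a i) w : ℝ)
                + t ^ 2 * (‖w‖ ^ 2 / (2 * Metric.infDist xbar (Ωs i))) := by
            rw [hinner_a]
            field_simp
          rw [h2] at h1
          rw [h4] at h3
          linarith
        have hsumle : ∑ i, Metric.infDist xbar (Ωs i) ≤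
            ∑ i, (Metric.infDist xbar (Ωs i) + t * (inner ℝ (a i) w : ℝ)
              + t ^ 2 * (‖w‖ ^ 2 / (2 * Metric.infDist xbar (Ωs i)))) :=
          le_trans hle (Finset.sum_le_sum fun i _ => hbound i)
        rw [Finset.sum_add_distrib, Finset.sum_add_distrib, ← Finset.mul_sum, ← Finset.mul_sum,
          ← hTin] at hsumle
        have h5 : 0 ≤ t * (inner ℝ T w : ℝ) + t ^ 2 * C := by rw [hC]; linarith
        nlinarith
      by_contra hneg
      push_neg at hneg
      set S : ℝ := (inner ℝ T w : ℝ)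
      set t : ℝ := min 1 ((-S) / (2 * C + 1)) with htdef
      have hSneg : S < 0 := hneg
      have ht0 : 0 < t := lt_min one_pos (div_pos (by linarith) (by linarith))
      have ht1 : t ≤ 1 := min_le_left _ _
      have ht2 : t ≤ (-S) / (2 * C + 1) := min_le_right _ _
      have ht3 : t * (2 * C + 1) ≤ -S := (le_div_iff₀ (by linarith)).mp ht2
      have := hstep t ht0 ht1
      nlinarith
    -- −T is in the normal cone, hence ⊥ L
    have hmemN : (-T) ∈ {v : EuclideanSpace ℝ (Fin s) | ∀ x ∈ Ω, (inner ℝ v (x - xbar) : ℝ) ≤ 0} := by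
      intro x hx
      rw [inner_neg_left]
      linarith [hTpos x hx]
    rw [hN] at hmemN
    have hTu : (inner ℝ T u : ℝ) = 0 := by
      have := hmemN u hu
      rw [inner_neg_left] at this
      linarith
    rw [hTin] at hTu
    calc ∑ i, (inner ℝ (a i) u : ℝ) / (‖a i‖ * ‖u‖)
        = (∑ i, (inner ℝ (a i) u : ℝ)) / ‖u‖ := by
          rw [Finset.sum_div]
          exact Finset.sum_congr rfl fun i _ => by rw [hna i, one_mul]
      _ = 0 := by rw [hTu, zero_div]
  · -- cosine condition → optimality
    intro hcos x hx
    have hTu : ∀ u ∈ L, (inner ℝ T u : ℝ) = 0 := by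
      intro u hu
      rcases eq_or_ne u 0 with rfl | hu0
      · simp
      · have h := hcos u hu hu0
        have hsum : ∑ i, (inner ℝ (a i) u : ℝ) / (‖a i‖ * ‖u‖)
            = (∑ i, (inner ℝ (a i) u : ℝ)) / ‖u‖ := by
          rw [Finset.sum_div]
          exact Finset.sum_congr rfl fun i _ => by rw [hna i, one_mul]
        rw [hsum, div_eq_zero_iff] at h
        rcases h with h | h
        · rw [hTin]; exact h
        · exact absurd h (norm_ne_zero_iff.mpr hu0)
    have hmemN : (-T) ∈ {v : EuclideanSpace ℝ (Fin s) | ∀ u ∈ L, (inner ℝ v u : ℝ) = 0} := by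
      intro u hu
      rw [inner_neg_left, hTu u hu, neg_zero]
    rw [← hN] at hmemN
    have hT0 : 0 ≤ (inner ℝ T (x - xbar) : ℝ) := by
      have := hmemN x hx
      rw [inner_neg_left] at this
      linarith
    have := Finset.sum_le_sum fun i (_ : i ∈ Finset.univ) => hsub i x
    rw [Finset.sum_add_distrib, ← hTin] at this
    linarith
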